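/- arXiv:1701.06126 — 2 statements merged into one kernel-verified Lean document; each statement's English description precedes it below -/
import Mathlib

section
/- Let n ≥ 8 and let F₃ be the 4-graph on [n] with edge set {{1,2,i,j} : 3 ≤ i < j ≤ n} ∪ {{1,3,i,j} : 4 ≤ i < j ≤ n} ∪ {{1,4,5,6}} ∪ {{2,3,i,j} : 4 ≤ i < j ≤ n} ∪ {{2,4,5,6}}. Then λ(F₃) ≤ 1/64 < 0.0169. -/
open Finset

/-- The Lagrangian of a hypergraph `G` with vertex set `[n] = {1, …, n}`. -/
noncomputable def lagN (n : ℕ) (G : Finset (Finset ℕ)) : ℝ :=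
  sSup {v : ℝ | ∃ x : ℕ → ℝ, (∀ i, 0 ≤ x i) ∧ (∑ i ∈ Finset.Icc 1 n, x i) = 1 ∧
    v = ∑ e ∈ G, ∏ i ∈ e, x i}

/-- The edges `{a, b, i, j}` over all 2-element subsets `{i, j}` of `s`. -/
def pairsWith (a b : ℕ) (s : Finset ℕ) : Finset (Finset ℕ) :=
  (s.powersetCard 2).image (fun p => insert a (insert b p))

/-- The edges `{a, i, j, k}` over all 3-element subsets `{i, j, k}` of `s`. -/
def triplesWith (a : ℕ) (s : Finset ℕ) : Finset (Finset ℕ) :=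
  (s.powersetCard 3).image (insert a)

/-- The edges `{a, b, c, k}` over all `k ∈ s`. -/
def singlesWith (a b c : ℕ) (s : Finset ℕ) : Finset (Finset ℕ) :=
  s.image (fun k => ({a, b, c, k} : Finset ℕ))

/-- The 4-graph `F₃` on `[n]`. -/
def F3 (n : ℕ) : Finset (Finset ℕ) :=
  pairsWith 1 2 (Finset.Icc 3 n) ∪ pairsWith 1 3 (Finset.Icc 4 n) ∪
    {({1, 4, 5, 6} : Finset ℕ)} ∪ pairsWith 2 3 (Finset.Icc 4 n) ∪
    {({2, 4, 5, 6} : Finset ℕ)}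

/-- Sum over a union is at most the sum of the sums, for nonnegative terms. -/
lemma sum_union_le'' (f : Finset ℕ → ℝ) (hf : ∀ e, 0 ≤ f e) (A B : Finset (Finset ℕ)) :
    ∑ e ∈ A ∪ B, f e ≤ ∑ e ∈ A, f e + ∑ e ∈ B, f e := by
  have h := Finset.sum_union_inter (s₁ := A) (s₂ := B) (f := f)
  have h2 : 0 ≤ ∑ e ∈ A ∩ B, f e := Finset.sum_nonneg fun e _ => hf e
  linarith

/-- `2 e₂(s) ≤ (∑ s)²` for nonnegative weights. -/
lemma two_e2_le (x : ℕ → ℝ) (hx : ∀ i, 0 ≤ x i) (s : Finset ℕ) :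
    2 * ∑ p ∈ s.powersetCard 2, ∏ i ∈ p, x i ≤ (∑ i ∈ s, x i)^2 := by
  induction s using Finset.induction_on with
  | empty =>
    rw [Finset.powersetCard_eq_empty.mpr (by simp)]
    simp
  | @insert a s ha ih =>
    rw [show (2:ℕ) = Nat.succ 1 from rfl, Finset.powersetCard_succ_insert ha,
      Finset.sum_union, Finset.sum_image, Finset.sum_insert ha]
    · have hone : ∑ p ∈ s.powersetCard 1, ∏ i ∈ insert a p, x i
          = x a * ∑ i ∈ s, x i := by
        rw [Finset.powersetCard_one, Finset.sum_map, Finset.mul_sum]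
        refine Finset.sum_congr rfl fun i hi => ?_
        have hai : a ∉ ({i} : Finset ℕ) := by
          simp only [Finset.mem_singleton]
          rintro rfl; exact ha hi
        simp [Finset.prod_insert hai]
      rw [hone]
      have hS : 0 ≤ ∑ i ∈ s, x i := Finset.sum_nonneg fun i _ => hx i
      nlinarith [ih, sq_nonneg (x a), hx a]
    · intro p hp q hq hpq
      have hpa : a ∉ p := fun h => ha ((Finset.mem_powersetCard.mp hp).1 h)
      have hqa : a ∉ q := fun h => ha ((Finset.mem_powersetCard.mp hq).1 h)
      rw [← Finset.erase_insert hpa, ← Finset.erase_insert hqa, hpq]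
    · rw [Finset.disjoint_left]
      intro p hp hp2
      obtain ⟨q, hq, rfl⟩ := Finset.mem_image.mp hp2
      exact ha ((Finset.mem_powersetCard.mp hp).1 (Finset.mem_insert_self a q))

lemma pairsWith_sum (x : ℕ → ℝ) (a b : ℕ) (s : Finset ℕ) (hab : a ≠ b)
    (has : a ∉ s) (hbs : b ∉ s) :
    ∑ e ∈ pairsWith a b s, ∏ i ∈ e, x i
      = x a * x b * ∑ p ∈ s.powersetCard 2, ∏ i ∈ p, x i := by
  rw [pairsWith, Finset.sum_image, Finset.mul_sum]
  · refine Finset.sum_congr rfl fun p hp => ?_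
    have hps : p ⊆ s := (Finset.mem_powersetCard.mp hp).1
    have hbp : b ∉ p := fun h => hbs (hps h)
    have hap : a ∉ insert b p := by
      simp only [Finset.mem_insert]
      rintro (rfl | h); · exact hab rfl
      · exact has (hps h)
    rw [Finset.prod_insert hap, Finset.prod_insert hbp, mul_assoc]
  · intro p hp q hq hpq
    have hbp : b ∉ p := fun h => hbs ((Finset.mem_powersetCard.mp hp).1 h)
    have hbq : b ∉ q := fun h => hbs ((Finset.mem_powersetCard.mp hq).1 h)
    have hap : a ∉ insert b p := by
      simp only [Finset.mem_insert]
      rintro (rfl | h); · exact hab rfl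
      · exact has ((Finset.mem_powersetCard.mp hp).1 h)
    have haq : a ∉ insert b q := by
      simp only [Finset.mem_insert]
      rintro (rfl | h); · exact hab rfl
      · exact has ((Finset.mem_powersetCard.mp hq).1 h)
    have := congrArg (fun t => (Finset.erase t a).erase b) hpq
    simpa [Finset.erase_insert hap, Finset.erase_insert haq,
      Finset.erase_insert hbp, Finset.erase_insert hbq] using this

/-- The main arithmetic inequality. -/
lemma key_ineq (u c T p E3 E4 P : ℝ) (hu : 0 ≤ u) (hc : 0 ≤ c) (hT : 0 ≤ T)
    (hp : 0 ≤ p) (hp4 : 4*p ≤ u^2) (hE3 : 0 ≤ E3) (h2E3 : 2*E3 ≤ (c+T)^2)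
    (hE4 : 0 ≤ E4) (h2E4 : 2*E4 ≤ T^2) (hP : 0 ≤ P) (hP27 : 27*P ≤ T^3)
    (hsum : u + c + T = 1) :
    p*E3 + u*c*E4 + u*P ≤ 1/64 := by
  have hs0 : 0 ≤ c + T := by linarith
  have h1 : p*E3 ≤ (u^2/4)*((c+T)^2/2) :=
    mul_le_mul (by linarith) (by linarith) hE3 (by positivity)
  have h2 : u*c*E4 ≤ u*c*(T^2/2) :=
    mul_le_mul_of_nonneg_left (by linarith) (by positivity)
  have h3 : u*P ≤ u*(T^3/27) := mul_le_mul_of_nonneg_left (by linarith) hu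
  have k1 : c*T^2/2 + T^3/27 ≤ 54*(c+T)^3/625 := by
    nlinarith [mul_nonneg hT (sq_nonneg (18*c - 7*T)), mul_nonneg hc (sq_nonneg (18*c - 7*T)),
      mul_nonneg hc (mul_nonneg hc hT), mul_nonneg (mul_nonneg hc hc) hc]
  have k2 : u^2*(c+T)^2/8 + 54*u*(c+T)^3/625 ≤ 1/64 := by
    nlinarith [sq_nonneg (c + T - 5/8), mul_nonneg hu (sq_nonneg (c + T - 5/8)),
      mul_nonneg hs0 (sq_nonneg (c + T - 5/8)), sq_nonneg (u*(c+T) - 15/64),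
      mul_nonneg hu hs0]
  have k1' : u*(c*T^2/2 + T^3/27) ≤ u*(54*(c+T)^3/625) :=
    mul_le_mul_of_nonneg_left k1 hu
  nlinarith [h1, h2, h3, k1', k2]

/-- For `n ≥ 8`, `λ(F₃) ≤ 1/64 < 0.0169`. -/
theorem lagrangian_F3 (n : ℕ) (hn : 8 ≤ n) :
    lagN n (F3 n) ≤ 1 / 64 ∧ (1 / 64 : ℝ) < 0.0169 := by
  constructor
  · apply Real.sSup_le _ (by norm_num)
    rintro v ⟨x, hx, hsum, rfl⟩
    have hprod : ∀ e : Finset ℕ, 0 ≤ ∏ i ∈ e, x i :=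
      fun e => Finset.prod_nonneg fun i _ => hx i
    -- notation
    set T : ℝ := ∑ i ∈ Finset.Icc 4 n, x i with hT
    set E3 : ℝ := ∑ p ∈ (Finset.Icc 3 n).powersetCard 2, ∏ i ∈ p, x i with hE3d
    set E4 : ℝ := ∑ p ∈ (Finset.Icc 4 n).powersetCard 2, ∏ i ∈ p, x i with hE4d
    have hT0 : 0 ≤ T := Finset.sum_nonneg fun i _ => hx i
    have hE30 : 0 ≤ E3 := Finset.sum_nonneg fun p _ => hprod p
    have hE40 : 0 ≤ E4 := Finset.sum_nonneg fun p _ => hprod p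
    -- decompose the total weight
    have hIcc : Finset.Icc 1 n = insert 1 (insert 2 (insert 3 (Finset.Icc 4 n))) := by
      ext i
      simp only [Finset.mem_Icc, Finset.mem_insert]
      omega
    have hsum1 : x 1 + x 2 + x 3 + T = 1 := by
      rw [hIcc] at hsum
      rw [Finset.sum_insert (by simp [Finset.mem_Icc]), Finset.sum_insert (by simp [Finset.mem_Icc]),
        Finset.sum_insert (by simp [Finset.mem_Icc])] at hsum
      linarith [hsum]
    have hIcc3 : Finset.Icc 3 n = insert 3 (Finset.Icc 4 n) := by
      ext i
      simp only [Finset.mem_Icc, Finset.mem_insert]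
      omega
    have hS3 : ∑ i ∈ Finset.Icc 3 n, x i = x 3 + T := by
      rw [hIcc3, Finset.sum_insert (by simp [Finset.mem_Icc])]
    -- bounds on E3, E4
    have h2E3 : 2*E3 ≤ (x 3 + T)^2 := by
      have := two_e2_le x hx (Finset.Icc 3 n)
      rwa [hS3] at this
    have h2E4 : 2*E4 ≤ T^2 := two_e2_le x hx (Finset.Icc 4 n)
    -- bound on x4 x5 x6
    have h456 : x 4 + x 5 + x 6 ≤ T := by
      have hsub : ({4, 5, 6} : Finset ℕ) ⊆ Finset.Icc 4 n := by
        intro i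
        simp only [Finset.mem_insert, Finset.mem_singleton, Finset.mem_Icc]
        omega
      have := Finset.sum_le_sum_of_subset_of_nonneg hsub (fun i _ _ => hx i)
      have hss : ∑ i ∈ ({4, 5, 6} : Finset ℕ), x i = x 4 + x 5 + x 6 := by
        rw [Finset.sum_insert (by decide), Finset.sum_insert (by decide),
          Finset.sum_singleton]; ring
      rw [hss] at this
      exact this
    have hP27 : 27*(x 4 * x 5 * x 6) ≤ T^3 := by
      have hamgm : 27*(x 4 * x 5 * x 6) ≤ (x 4 + x 5 + x 6)^3 := by
        nlinarith [sq_nonneg (x 4 - x 5), sq_nonneg (x 5 - x 6), sq_nonneg (x 4 - x 6),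
          mul_nonneg (hx 4) (hx 5), mul_nonneg (hx 5) (hx 6), mul_nonneg (hx 4) (hx 6),
          hx 4, hx 5, hx 6]
      have hpow : (x 4 + x 5 + x 6)^3 ≤ T^3 := by
        apply pow_le_pow_left₀ (by have := hx 4; have := hx 5; have := hx 6; linarith) h456
      linarith
    -- sums over the parts
    have hp12 : ∑ e ∈ pairsWith 1 2 (Finset.Icc 3 n), ∏ i ∈ e, x i = x 1 * x 2 * E3 :=
      pairsWith_sum x 1 2 _ (by decide) (by simp [Finset.mem_Icc]) (by simp [Finset.mem_Icc])
    have hp13 : ∑ e ∈ pairsWith 1 3 (Finset.Icc 4 n), ∏ i ∈ e, x i = x 1 * x 3 * E4 :=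
      pairsWith_sum x 1 3 _ (by decide) (by simp [Finset.mem_Icc]) (by simp [Finset.mem_Icc])
    have hp23 : ∑ e ∈ pairsWith 2 3 (Finset.Icc 4 n), ∏ i ∈ e, x i = x 2 * x 3 * E4 :=
      pairsWith_sum x 2 3 _ (by decide) (by simp [Finset.mem_Icc]) (by simp [Finset.mem_Icc])
    have hs1 : ∑ e ∈ ({({1, 4, 5, 6} : Finset ℕ)} : Finset (Finset ℕ)), ∏ i ∈ e, x i
        = x 1 * (x 4 * x 5 * x 6) := by
      rw [Finset.sum_singleton, Finset.prod_insert (by decide), Finset.prod_insert (by decide),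
        Finset.prod_insert (by decide), Finset.prod_singleton]; ring
    have hs2 : ∑ e ∈ ({({2, 4, 5, 6} : Finset ℕ)} : Finset (Finset ℕ)), ∏ i ∈ e, x i
        = x 2 * (x 4 * x 5 * x 6) := by
      rw [Finset.sum_singleton, Finset.prod_insert (by decide), Finset.prod_insert (by decide),
        Finset.prod_insert (by decide), Finset.prod_singleton]; ring
    -- bound the total sum
    have hbound : ∑ e ∈ F3 n, ∏ i ∈ e, x i
        ≤ x 1 * x 2 * E3 + (x 1 + x 2) * x 3 * E4 + (x 1 + x 2) * (x 4 * x 5 * x 6) := by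
      rw [F3]
      calc ∑ e ∈ (pairsWith 1 2 (Finset.Icc 3 n) ∪ pairsWith 1 3 (Finset.Icc 4 n) ∪
            {({1, 4, 5, 6} : Finset ℕ)} ∪ pairsWith 2 3 (Finset.Icc 4 n) ∪
            {({2, 4, 5, 6} : Finset ℕ)}), ∏ i ∈ e, x i
          ≤ ∑ e ∈ (pairsWith 1 2 (Finset.Icc 3 n) ∪ pairsWith 1 3 (Finset.Icc 4 n) ∪
            {({1, 4, 5, 6} : Finset ℕ)} ∪ pairsWith 2 3 (Finset.Icc 4 n)), ∏ i ∈ e, x i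
            + ∑ e ∈ ({({2, 4, 5, 6} : Finset ℕ)} : Finset (Finset ℕ)), ∏ i ∈ e, x i :=
            sum_union_le'' _ hprod _ _
        _ ≤ (∑ e ∈ (pairsWith 1 2 (Finset.Icc 3 n) ∪ pairsWith 1 3 (Finset.Icc 4 n) ∪
            {({1, 4, 5, 6} : Finset ℕ)}), ∏ i ∈ e, x i
            + ∑ e ∈ pairsWith 2 3 (Finset.Icc 4 n), ∏ i ∈ e, x i)
            + ∑ e ∈ ({({2, 4, 5, 6} : Finset ℕ)} : Finset (Finset ℕ)), ∏ i ∈ e, x i := by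
            gcongr ?_ + _
            exact sum_union_le'' _ hprod _ _
        _ ≤ ((∑ e ∈ (pairsWith 1 2 (Finset.Icc 3 n) ∪ pairsWith 1 3 (Finset.Icc 4 n)),
              ∏ i ∈ e, x i
            + ∑ e ∈ ({({1, 4, 5, 6} : Finset ℕ)} : Finset (Finset ℕ)), ∏ i ∈ e, x i)
            + ∑ e ∈ pairsWith 2 3 (Finset.Icc 4 n), ∏ i ∈ e, x i)
            + ∑ e ∈ ({({2, 4, 5, 6} : Finset ℕ)} : Finset (Finset ℕ)), ∏ i ∈ e, x i := by
            gcongr ?_ + _ + _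
            exact sum_union_le'' _ hprod _ _
        _ ≤ (((∑ e ∈ pairsWith 1 2 (Finset.Icc 3 n), ∏ i ∈ e, x i
            + ∑ e ∈ pairsWith 1 3 (Finset.Icc 4 n), ∏ i ∈ e, x i)
            + ∑ e ∈ ({({1, 4, 5, 6} : Finset ℕ)} : Finset (Finset ℕ)), ∏ i ∈ e, x i)
            + ∑ e ∈ pairsWith 2 3 (Finset.Icc 4 n), ∏ i ∈ e, x i)
            + ∑ e ∈ ({({2, 4, 5, 6} : Finset ℕ)} : Finset (Finset ℕ)), ∏ i ∈ e, x i := by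
            gcongr ?_ + _ + _ + _
            exact sum_union_le'' _ hprod _ _
        _ = x 1 * x 2 * E3 + (x 1 + x 2) * x 3 * E4 + (x 1 + x 2) * (x 4 * x 5 * x 6) := by
            rw [hp12, hp13, hp23, hs1, hs2]; ring
    refine hbound.trans ?_
    exact key_ineq (x 1 + x 2) (x 3) T (x 1 * x 2) E3 E4 (x 4 * x 5 * x 6)
      (by have := hx 1; have := hx 2; linarith) (hx 3) hT0
      (mul_nonneg (hx 1) (hx 2)) (by nlinarith [sq_nonneg (x 1 - x 2)])
      hE30 h2E3 hE40 h2E4 (mul_nonneg (mul_nonneg (hx 4) (hx 5)) (hx 6)) hP27 hsum1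
  · norm_num
end

section
/- Let n ≥ 8 and let F₄ be the 4-graph on [n] with edge set {{1,2,i,j} : 3 ≤ i < j ≤ n} ∪ {{1,3,4,k} : 5 ≤ k ≤ n} ∪ {{1,3,5,l} : 6 ≤ l ≤ n} ∪ {{1,4,5,l} : 6 ≤ l ≤ n} ∪ {{2,3,4,k} : 5 ≤ k ≤ n} ∪ {{2,3,5,l} : 6 ≤ l ≤ n} ∪ {{2,4,5,l} : 6 ≤ l ≤ n}. Then λ(F₄) ≤ 4/243 < 0.0169. -/
open Finset

/-- The 4-graph `F₄` on `[n]`. -/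
def F4 (n : ℕ) : Finset (Finset ℕ) :=
  pairsWith 1 2 (Finset.Icc 3 n) ∪ singlesWith 1 3 4 (Finset.Icc 5 n) ∪
    singlesWith 1 3 5 (Finset.Icc 6 n) ∪ singlesWith 1 4 5 (Finset.Icc 6 n) ∪
    singlesWith 2 3 4 (Finset.Icc 5 n) ∪ singlesWith 2 3 5 (Finset.Icc 6 n) ∪
    singlesWith 2 4 5 (Finset.Icc 6 n)



lemma sum_union_le_aux (A B : Finset (Finset ℕ)) (f : Finset ℕ → ℝ) (hf : ∀ e, 0 ≤ f e) :
    ∑ e ∈ A ∪ B, f e ≤ ∑ e ∈ A, f e + ∑ e ∈ B, f e := by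
  have h := Finset.sum_union_inter (s₁ := A) (s₂ := B) (f := f)
  have : 0 ≤ ∑ e ∈ A ∩ B, f e := Finset.sum_nonneg fun e _ => hf e
  linarith

lemma sum_singlesWith (a b c : ℕ) (s : Finset ℕ) (x : ℕ → ℝ)
    (hab : a ≠ b) (hac : a ≠ c) (hbc : b ≠ c)
    (hs : ∀ k ∈ s, k ≠ a ∧ k ≠ b ∧ k ≠ c) :
    ∑ e ∈ singlesWith a b c s, ∏ i ∈ e, x i = x a * x b * x c * ∑ k ∈ s, x k := by
  rw [singlesWith, Finset.sum_image]
  · rw [Finset.mul_sum]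
    refine Finset.sum_congr rfl fun k hk => ?_
    obtain ⟨hka, hkb, hkc⟩ := hs k hk
    rw [show ({a,b,c,k} : Finset ℕ) = insert a (insert b (insert c {k})) from rfl]
    rw [Finset.prod_insert (by simp [hab, hac, Ne.symm hka]),
       Finset.prod_insert (by simp [hbc, Ne.symm hkb]),
       Finset.prod_insert (by simp [Ne.symm hkc]), Finset.prod_singleton]
    ring
  · intro k hk k' hk' h
    obtain ⟨hka, hkb, hkc⟩ := hs k hk
    have : k ∈ ({a,b,c,k'} : Finset ℕ) := (show ({a,b,c,k} : Finset ℕ) = {a,b,c,k'} from h) ▸ (by simp)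
    simp only [Finset.mem_insert, Finset.mem_singleton] at this
    tauto

lemma sum_pairsWith (s : Finset ℕ) (x : ℕ → ℝ) (hs : ∀ k ∈ s, k ≠ 1 ∧ k ≠ 2) :
    ∑ e ∈ pairsWith 1 2 s, ∏ i ∈ e, x i
      = x 1 * x 2 * ∑ p ∈ s.powersetCard 2, ∏ i ∈ p, x i := by
  have hsub : ∀ p q : Finset ℕ, p ⊆ s → q ⊆ s →
      insert 1 (insert 2 p) = insert 1 (insert 2 q) → p ⊆ q := by
    intro p q hp hq h i hi
    have h12 := hs i (hp hi)
    have hmem : i ∈ insert 1 (insert 2 q) := by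
      rw [← h]; simp only [Finset.mem_insert]; tauto
    simp only [Finset.mem_insert, h12.1, h12.2, false_or] at hmem
    exact hmem
  rw [pairsWith, Finset.sum_image]
  · rw [Finset.mul_sum]
    refine Finset.sum_congr rfl fun p hp => ?_
    have hps : p ⊆ s := (Finset.mem_powersetCard.mp hp).1
    have h1 : (1 : ℕ) ∉ p := fun h => (hs 1 (hps h)).1 rfl
    have h2 : (2 : ℕ) ∉ p := fun h => (hs 2 (hps h)).2 rfl
    rw [Finset.prod_insert (by simp [h1]), Finset.prod_insert h2]
    ring
  · intro p hp q hq h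
    have hps : p ⊆ s := (Finset.mem_powersetCard.mp hp).1
    have hqs : q ⊆ s := (Finset.mem_powersetCard.mp hq).1
    exact Finset.Subset.antisymm (hsub p q hps hqs h) (hsub q p hqs hps h.symm)

lemma e2_le (s : Finset ℕ) (x : ℕ → ℝ) (hx : ∀ i, 0 ≤ x i) :
    2 * ∑ p ∈ s.powersetCard 2, ∏ i ∈ p, x i ≤ (∑ i ∈ s, x i) ^ 2 := by
  induction s using Finset.induction with
  | empty => rw [show (∅ : Finset ℕ).powersetCard 2 = ∅ by apply Finset.powersetCard_eq_empty.mpr; simp]; simp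
  | @insert a s ha ih =>
    have hrw : (insert a s).powersetCard 2 =
        s.powersetCard 2 ∪ (s.powersetCard 1).image (insert a) :=
      Finset.powersetCard_succ_insert ha 1
    have hdisj : Disjoint (s.powersetCard 2) ((s.powersetCard 1).image (insert a)) := by
      rw [Finset.disjoint_left]
      intro p hp hp'
      obtain ⟨q, hq, rfl⟩ := Finset.mem_image.mp hp'
      have : insert a q ⊆ s := (Finset.mem_powersetCard.mp hp).1
      exact ha (this (Finset.mem_insert_self a q))
    have himg : ∑ p ∈ (s.powersetCard 1).image (insert a), ∏ i ∈ p, x i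
        = x a * ∑ i ∈ s, x i := by
      rw [Finset.sum_image]
      · rw [Finset.powersetCard_one, Finset.sum_map, Finset.mul_sum]
        refine Finset.sum_congr rfl fun i hi => ?_
        have hia : a ≠ i := fun h => ha (h ▸ hi)
        simp only [Function.Embedding.coeFn_mk]
        rw [Finset.prod_insert (by simp [hia]), Finset.prod_singleton]
      · intro p hp q hq h
        have hps : p ⊆ s := (Finset.mem_powersetCard.mp hp).1
        have hqs : q ⊆ s := (Finset.mem_powersetCard.mp hq).1
        have hap : a ∉ p := fun h' => ha (hps h')
        have haq : a ∉ q := fun h' => ha (hqs h')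
        have := congrArg (Finset.erase · a) h
        simpa [Finset.erase_insert, hap, haq] using this
    rw [hrw, Finset.sum_union hdisj, himg, Finset.sum_insert ha]
    have hS : 0 ≤ ∑ i ∈ s, x i := Finset.sum_nonneg fun i _ => hx i
    nlinarith [hx a, sq_nonneg (x a)]

set_option maxHeartbeats 1600000 in
/-- For `n ≥ 8`, `λ(F₄) ≤ 4/243 < 0.0169`. -/
theorem lagrangian_F4 (n : ℕ) (hn : 8 ≤ n) :
    lagN n (F4 n) ≤ 4 / 243 ∧ (4 / 243 : ℝ) < 0.0169 := by
  refine ⟨?_, by norm_num⟩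
  apply Real.sSup_le _ (by norm_num)
  rintro v ⟨x, hx, hsum, rfl⟩
  have hfnn : ∀ e : Finset ℕ, 0 ≤ ∏ i ∈ e, x i := fun e => Finset.prod_nonneg fun i _ => hx i
  -- interval decompositions
  have h5eq : Finset.Icc 5 n = insert 5 (Finset.Icc 6 n) := by
    ext i; simp only [Finset.mem_Icc, Finset.mem_insert]; omega
  have h3eq : Finset.Icc 3 n = insert 3 (insert 4 (insert 5 (Finset.Icc 6 n))) := by
    ext i; simp only [Finset.mem_Icc, Finset.mem_insert]; omega
  have h1eq : Finset.Icc 1 n = insert 1 (insert 2 (Finset.Icc 3 n)) := by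
    ext i; simp only [Finset.mem_Icc, Finset.mem_insert]; omega
  set a := x 1 with ha
  set b := x 2 with hb
  set c := x 3 with hc
  set d := x 4 with hd
  set e5 := x 5 with he5
  set S6 := ∑ i ∈ Finset.Icc 6 n, x i with hS6def
  have hS6 : 0 ≤ S6 := Finset.sum_nonneg fun i _ => hx i
  have hS5 : ∑ i ∈ Finset.Icc 5 n, x i = e5 + S6 := by
    rw [h5eq, Finset.sum_insert (by simp [Finset.mem_Icc])]
  have hS3 : ∑ i ∈ Finset.Icc 3 n, x i = c + d + e5 + S6 := by
    rw [h3eq, Finset.sum_insert (by simp [Finset.mem_Icc]),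
      Finset.sum_insert (by simp [Finset.mem_Icc]),
      Finset.sum_insert (by simp [Finset.mem_Icc])]
    ring
  have hone : a + b + (c + d + e5 + S6) = 1 := by
    rw [← hS3, ← hsum, h1eq, Finset.sum_insert (by simp [h3eq, Finset.mem_Icc]),
      Finset.sum_insert (by simp [h3eq, Finset.mem_Icc])]
    ring
  -- closed forms for the seven parts
  set E2 := ∑ p ∈ (Finset.Icc 3 n).powersetCard 2, ∏ i ∈ p, x i with hE2def
  have hE2nn : 0 ≤ E2 := Finset.sum_nonneg fun p _ => hfnn p
  have hE2 : 2 * E2 ≤ (c + d + e5 + S6) ^ 2 := by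
    have := e2_le (Finset.Icc 3 n) x hx
    rwa [hS3] at this
  have hA : ∑ e ∈ pairsWith 1 2 (Finset.Icc 3 n), ∏ i ∈ e, x i = a * b * E2 :=
    sum_pairsWith _ x (by intro k hk; simp only [Finset.mem_Icc] at hk; omega)
  have hB1 : ∑ e ∈ singlesWith 1 3 4 (Finset.Icc 5 n), ∏ i ∈ e, x i = a * c * d * (e5 + S6) := by
    rw [sum_singlesWith 1 3 4 _ x (by norm_num) (by norm_num) (by norm_num)
      (by intro k hk; simp only [Finset.mem_Icc] at hk; omega), hS5]
  have hB2 : ∑ e ∈ singlesWith 1 3 5 (Finset.Icc 6 n), ∏ i ∈ e, x i = a * c * e5 * S6 :=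
    sum_singlesWith 1 3 5 _ x (by norm_num) (by norm_num) (by norm_num)
      (by intro k hk; simp only [Finset.mem_Icc] at hk; omega)
  have hB3 : ∑ e ∈ singlesWith 1 4 5 (Finset.Icc 6 n), ∏ i ∈ e, x i = a * d * e5 * S6 :=
    sum_singlesWith 1 4 5 _ x (by norm_num) (by norm_num) (by norm_num)
      (by intro k hk; simp only [Finset.mem_Icc] at hk; omega)
  have hB4 : ∑ e ∈ singlesWith 2 3 4 (Finset.Icc 5 n), ∏ i ∈ e, x i = b * c * d * (e5 + S6) := by
    rw [sum_singlesWith 2 3 4 _ x (by norm_num) (by norm_num) (by norm_num)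
      (by intro k hk; simp only [Finset.mem_Icc] at hk; omega), hS5]
  have hB5 : ∑ e ∈ singlesWith 2 3 5 (Finset.Icc 6 n), ∏ i ∈ e, x i = b * c * e5 * S6 :=
    sum_singlesWith 2 3 5 _ x (by norm_num) (by norm_num) (by norm_num)
      (by intro k hk; simp only [Finset.mem_Icc] at hk; omega)
  have hB6 : ∑ e ∈ singlesWith 2 4 5 (Finset.Icc 6 n), ∏ i ∈ e, x i = b * d * e5 * S6 :=
    sum_singlesWith 2 4 5 _ x (by norm_num) (by norm_num) (by norm_num)
      (by intro k hk; simp only [Finset.mem_Icc] at hk; omega)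
  have hle : ∑ e ∈ F4 n, ∏ i ∈ e, x i ≤
      a * b * E2 + a * c * d * (e5 + S6) + a * c * e5 * S6 + a * d * e5 * S6 +
        b * c * d * (e5 + S6) + b * c * e5 * S6 + b * d * e5 * S6 := by
    rw [← hA, ← hB1, ← hB2, ← hB3, ← hB4, ← hB5, ← hB6]
    unfold F4
    refine le_trans (sum_union_le_aux _ _ _ hfnn) (add_le_add ?_ le_rfl)
    refine le_trans (sum_union_le_aux _ _ _ hfnn) (add_le_add ?_ le_rfl)
    refine le_trans (sum_union_le_aux _ _ _ hfnn) (add_le_add ?_ le_rfl)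
    refine le_trans (sum_union_le_aux _ _ _ hfnn) (add_le_add ?_ le_rfl)
    refine le_trans (sum_union_le_aux _ _ _ hfnn) (add_le_add ?_ le_rfl)
    exact sum_union_le_aux _ _ _ hfnn
  -- numeric bounds
  have hxa := hx 1; have hxb := hx 2; have hxc := hx 3; have hxd := hx 4; have hxe := hx 5
  rw [← ha] at hxa; rw [← hb] at hxb; rw [← hc] at hxc; rw [← hd] at hxd; rw [← he5] at hxe
  clear_value a b c d e5 S6 E2
  clear hsum h5eq h3eq h1eq hS5 hS3 hA hB1 hB2 hB3 hB4 hB5 hB6 hfnn hx ha hb hc hd he5 hS6def hE2def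
  set P := a + b with hP
  set u := c + d + e5 with hu
  set Q := c + d + e5 + S6 with hQ
  clear_value P u Q
  have hPnn : 0 ≤ P := by rw [hP]; linarith
  have hQnn : 0 ≤ Q := by rw [hQ]; linarith
  have hPQ : P + Q = 1 := by rw [hP, hQ]; linarith [hone]
  have hQu : Q = u + S6 := by rw [hQ, hu]
  have h1 : a * b * E2 ≤ (P ^ 2 / 4) * (Q ^ 2 / 2) := by
    refine mul_le_mul ?_ (by linarith [hE2]) hE2nn (by positivity)
    rw [hP]; nlinarith [sq_nonneg (a - b)]
  have amgm : 27 * (c * d * e5) ≤ u ^ 3 := by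
    rw [hu]
    nlinarith [mul_nonneg hxc (sq_nonneg (d - e5)), mul_nonneg hxd (sq_nonneg (c - e5)),
      mul_nonneg hxe (sq_nonneg (c - d)),
      mul_nonneg (add_nonneg (add_nonneg hxc hxd) hxe) (sq_nonneg (c - d)),
      mul_nonneg (add_nonneg (add_nonneg hxc hxd) hxe) (sq_nonneg (d - e5)),
      mul_nonneg (add_nonneg (add_nonneg hxc hxd) hxe) (sq_nonneg (c - e5))]
  have pair3 : 3 * (c * d + c * e5 + d * e5) ≤ u ^ 2 := by
    rw [hu]
    nlinarith [sq_nonneg (c - d), sq_nonneg (c - e5), sq_nonneg (d - e5)]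
  have hunn : 0 ≤ u := by rw [hu]; linarith
  have hD : c * d * e5 + (c * d + c * e5 + d * e5) * S6 ≤ Q ^ 3 / 16 := by
    have key : 0 ≤ (4 * u - 3 * Q) ^ 2 * (8 * u + 3 * Q) :=
      mul_nonneg (sq_nonneg _) (by linarith)
    have hS6Q : S6 = Q - u := by rw [hQu]; ring
    have hcde : c * d * e5 ≤ u ^ 3 / 27 := by linarith
    have h2 : (c * d + c * e5 + d * e5) * S6 ≤ (u ^ 2 / 3) * (Q - u) := by
      rw [← hS6Q]
      exact mul_le_mul_of_nonneg_right (by linarith) hS6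
    have hpoly : u ^ 3 / 27 + (u ^ 2 / 3) * (Q - u) ≤ Q ^ 3 / 16 := by nlinarith [key]
    linarith
  have hsingles : a * c * d * (e5 + S6) + a * c * e5 * S6 + a * d * e5 * S6 +
      b * c * d * (e5 + S6) + b * c * e5 * S6 + b * d * e5 * S6 ≤ P * (Q ^ 3 / 16) := by
    have : a * c * d * (e5 + S6) + a * c * e5 * S6 + a * d * e5 * S6 +
        b * c * d * (e5 + S6) + b * c * e5 * S6 + b * d * e5 * S6
        = P * (c * d * e5 + (c * d + c * e5 + d * e5) * S6) := by rw [hP]; ring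
    rw [this]
    exact mul_le_mul_of_nonneg_left hD hPnn
  have hfirst : (P ^ 2 / 4) * (Q ^ 2 / 2) ≤ 1 / 128 := by
    have hpq : P * Q ≤ 1 / 4 := by nlinarith [sq_nonneg (P - Q)]
    have hpqnn : 0 ≤ P * Q := mul_nonneg hPnn hQnn
    nlinarith [mul_nonneg (by linarith : (0:ℝ) ≤ 1 / 4 - P * Q) (by linarith : (0:ℝ) ≤ 1 / 4 + P * Q)]
  have hsecond : P * (Q ^ 3 / 16) ≤ 27 / 4096 := by
    have hP1 : P = 1 - Q := by linarith
    rw [hP1]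
    nlinarith [mul_nonneg (sq_nonneg (Q - 3 / 4)) (show (0:ℝ) ≤ Q ^ 2 + Q / 2 + 3 / 16 by positivity)]
  calc ∑ e ∈ F4 n, ∏ i ∈ e, x i
      ≤ a * b * E2 + a * c * d * (e5 + S6) + a * c * e5 * S6 + a * d * e5 * S6 +
        b * c * d * (e5 + S6) + b * c * e5 * S6 + b * d * e5 * S6 := hle
    _ ≤ (P ^ 2 / 4) * (Q ^ 2 / 2) + P * (Q ^ 3 / 16) := by linarith
    _ ≤ 1 / 128 + 27 / 4096 := by linarith
    _ ≤ 4 / 243 := by norm_num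
end
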